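/- Necklace bracket formulas for the path algebra P = kQ̄: for p ∈ P_♮ = P/[P,P] one has dp = Σ_{a∈Q̄} (∂_a p) da in DR¹_R P, the Hamiltonian derivation θ_p determined by i_{θ_p}ω = dp satisfies θ_p(a) = ε(a)·∂_{a*} p for all edges a ∈ Q̄, and the necklace Lie bracket is {p,q} = Σ_{a∈Q̄} ε(a*)(∂_a p)(∂_{a*} q) mod [P,P], where ∂_a p := Σ_{i: a_i = a} (p_{>i})(p_{<i}) is the cyclic derivative and ε(a) = +1 for a ∈ Q, −1 for a ∈ Q̄∖Q. -/

import Mathlib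

open TensorProduct

/-- The defining relations of the path algebra `P = kQ̄` of the double `Q̄` of a quiver
`Q` with vertex set `I`, edge set `E` and source/target maps `s, t`: presented as a
quotient of the free algebra on `I ⊕ (E ⊕ E)` (vertex idempotents, edges, reversed
edges). -/
inductive PathRel (k I E : Type) [CommRing k] [Fintype I] [DecidableEq I]
    (s t : E → I) :
    FreeAlgebra k (I ⊕ (E ⊕ E)) → FreeAlgebra k (I ⊕ (E ⊕ E)) → Prop
  | idem (i j : I) : PathRel k I E s t
      (FreeAlgebra.ι k (Sum.inl i) * FreeAlgebra.ι k (Sum.inl j))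
      (if i = j then FreeAlgebra.ι k (Sum.inl i) else 0)
  | unit : PathRel k I E s t (∑ i : I, FreeAlgebra.ι k (Sum.inl i)) 1
  | tgt (a : E ⊕ E) : PathRel k I E s t
      (FreeAlgebra.ι k (Sum.inl (Sum.elim t s a)) * FreeAlgebra.ι k (Sum.inr a))
      (FreeAlgebra.ι k (Sum.inr a))
  | src (a : E ⊕ E) : PathRel k I E s t
      (FreeAlgebra.ι k (Sum.inr a) * FreeAlgebra.ι k (Sum.inl (Sum.elim s t a)))
      (FreeAlgebra.ι k (Sum.inr a))

/-- The reversal involution on the edges of the double quiver. -/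
def starE {E : Type} : E ⊕ E → E ⊕ E := Sum.elim Sum.inr Sum.inl

/-- The sign `ε(a)`: `+1` on edges of `Q`, `-1` on reversed edges. -/
def signE (k : Type) [CommRing k] {E : Type} : E ⊕ E → k :=
  Sum.elim (fun _ => (1 : k)) (fun _ => (-1 : k))

/-- The cyclic derivative `∂_a p = m ∘ flip ∘ (∂/∂a)(p)` obtained from a double
derivation `D = ∂/∂a`. -/
noncomputable def cycDer {k A : Type} [CommRing k] [Ring A] [Algebra k A]
    (D : A →ₗ[k] A ⊗[k] A) (p : A) : A :=
  LinearMap.mul' k A ((TensorProduct.comm k A A) (D p))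

section Generic
variable {k A : Type} [CommRing k] [Ring A] [Algebra k A]

/-- `KL Dm z p = mul (comm (Dm p * (1 ⊗ z)))` as a linear map in `p`. -/
noncomputable def KL (Dm : A →ₗ[k] A ⊗[k] A) (z : A) : A →ₗ[k] A :=
  (LinearMap.mul' k A) ∘ₗ (TensorProduct.comm k A A).toLinearMap ∘ₗ
    (LinearMap.mulRight k ((1:A) ⊗ₜ[k] z)) ∘ₗ Dm

lemma KL_apply (Dm : A →ₗ[k] A ⊗[k] A) (z p : A) :
    KL Dm z p = LinearMap.mul' k A ((TensorProduct.comm k A A) (Dm p * ((1:A) ⊗ₜ[k] z))) := rfl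

lemma KL_one (Dm : A →ₗ[k] A ⊗[k] A) (p : A) : KL Dm 1 p = cycDer Dm p := by
  rw [KL_apply, cycDer, ← Algebra.TensorProduct.one_def, mul_one]

lemma mc_lmul (u z : A) (tv : A ⊗[k] A) :
    LinearMap.mul' k A ((TensorProduct.comm k A A) (((u ⊗ₜ[k] (1:A)) * tv) * ((1:A) ⊗ₜ[k] z)))
      = LinearMap.mul' k A ((TensorProduct.comm k A A) (tv * ((1:A) ⊗ₜ[k] (z * u)))) := by
  induction tv using TensorProduct.induction_on with
  | zero => simp
  | tmul α β =>
      simp [Algebra.TensorProduct.tmul_mul_tmul, LinearMap.mul'_apply, mul_assoc]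
  | add x y hx hy => simp only [mul_add, add_mul, map_add, hx, hy]

lemma mc_rmul (v z : A) (tu : A ⊗[k] A) :
    LinearMap.mul' k A ((TensorProduct.comm k A A) ((tu * ((1:A) ⊗ₜ[k] v)) * ((1:A) ⊗ₜ[k] z)))
      = LinearMap.mul' k A ((TensorProduct.comm k A A) (tu * ((1:A) ⊗ₜ[k] (v * z)))) := by
  rw [mul_assoc, Algebra.TensorProduct.tmul_mul_tmul, one_mul]

lemma KL_mul (Dm : A →ₗ[k] A ⊗[k] A)
    (hD : ∀ u v : A, Dm (u*v) = (u ⊗ₜ[k] (1:A)) * Dm v + Dm u * ((1:A) ⊗ₜ[k] v))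
    (z u v : A) :
    KL Dm z (u*v) = KL Dm (z*u) v + KL Dm (v*z) u := by
  simp only [KL_apply, hD, add_mul, map_add]
  rw [mc_lmul, mc_rmul]
end Generic

section Generic2
variable {k A : Type} [CommRing k] [Ring A] [Algebra k A]

/-- `InsL Dm h p = mul (map id (mulLeft h) (Dm p))`, i.e. `Σ α h β` for `Dm p = Σ α ⊗ β`. -/
noncomputable def InsL (Dm : A →ₗ[k] A ⊗[k] A) (h : A) : A →ₗ[k] A :=
  (LinearMap.mul' k A) ∘ₗ
    (TensorProduct.map LinearMap.id (LinearMap.mulLeft k h)) ∘ₗ Dm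

lemma InsL_apply (Dm : A →ₗ[k] A ⊗[k] A) (h p : A) :
    InsL Dm h p = LinearMap.mul' k A
      ((TensorProduct.map LinearMap.id (LinearMap.mulLeft k h)) (Dm p)) := rfl

lemma ins_lmul (h u : A) (tv : A ⊗[k] A) :
    LinearMap.mul' k A ((TensorProduct.map LinearMap.id (LinearMap.mulLeft k h))
        ((u ⊗ₜ[k] (1:A)) * tv))
      = u * LinearMap.mul' k A
          ((TensorProduct.map LinearMap.id (LinearMap.mulLeft k h)) tv) := by
  induction tv using TensorProduct.induction_on with
  | zero => simp
  | tmul α β => simp [Algebra.TensorProduct.tmul_mul_tmul, mul_assoc]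
  | add x y hx hy => simp only [mul_add, map_add, hx, hy]

lemma ins_rmul (h v : A) (tu : A ⊗[k] A) :
    LinearMap.mul' k A ((TensorProduct.map LinearMap.id (LinearMap.mulLeft k h))
        (tu * ((1:A) ⊗ₜ[k] v)))
      = LinearMap.mul' k A
          ((TensorProduct.map LinearMap.id (LinearMap.mulLeft k h)) tu) * v := by
  induction tu using TensorProduct.induction_on with
  | zero => simp
  | tmul α β => simp [Algebra.TensorProduct.tmul_mul_tmul, mul_assoc]
  | add x y hx hy => simp only [add_mul, map_add, hx, hy]

lemma ins_smul (c : k) (h : A) (tv : A ⊗[k] A) :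
    LinearMap.mul' k A ((TensorProduct.map LinearMap.id (LinearMap.mulLeft k (c • h))) tv)
      = c • LinearMap.mul' k A
          ((TensorProduct.map LinearMap.id (LinearMap.mulLeft k h)) tv) := by
  induction tv using TensorProduct.induction_on with
  | zero => simp
  | tmul α β => simp [smul_mul_assoc, mul_smul_comm]
  | add x y hx hy => simp only [map_add, hx, hy, smul_add]

lemma ins_sub_comm_mem (g : A) (tv : A ⊗[k] A) :
    LinearMap.mul' k A ((TensorProduct.map LinearMap.id (LinearMap.mulLeft k g)) tv)
      - g * LinearMap.mul' k A ((TensorProduct.comm k A A) tv)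
      ∈ Submodule.span k {z : A | ∃ u v : A, z = u * v - v * u} := by
  induction tv using TensorProduct.induction_on with
  | zero => simp
  | tmul α β =>
      refine Submodule.subset_span ⟨α, g * β, ?_⟩
      simp [mul_assoc]
  | add x y hx hy =>
      have : LinearMap.mul' k A ((TensorProduct.map LinearMap.id (LinearMap.mulLeft k g)) (x + y))
          - g * LinearMap.mul' k A ((TensorProduct.comm k A A) (x + y))
          = (LinearMap.mul' k A ((TensorProduct.map LinearMap.id (LinearMap.mulLeft k g)) x)
              - g * LinearMap.mul' k A ((TensorProduct.comm k A A) x))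
            + (LinearMap.mul' k A ((TensorProduct.map LinearMap.id (LinearMap.mulLeft k g)) y)
              - g * LinearMap.mul' k A ((TensorProduct.comm k A A) y)) := by
        simp only [map_add, mul_add]; abel
      rw [this]; exact Submodule.add_mem _ hx hy
end Generic2

set_option linter.unusedSectionVars false

/-- vertex idempotent -/
noncomputable def eV (k : Type) [Field k] {I E : Type} [Fintype I] [DecidableEq I]
    (s t : E → I) (i : I) : RingQuot (PathRel k I E s t) :=
  RingQuot.mkAlgHom k (PathRel k I E s t) (FreeAlgebra.ι k (Sum.inl i))

/-- edge generator -/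
noncomputable def gE (k : Type) [Field k] {I E : Type} [Fintype I] [DecidableEq I]
    (s t : E → I) (a : E ⊕ E) : RingQuot (PathRel k I E s t) :=
  RingQuot.mkAlgHom k (PathRel k I E s t) (FreeAlgebra.ι k (Sum.inr a))

section PathAlg
variable {k I E : Type} [Field k] [Fintype I] [DecidableEq I] [Fintype E] [DecidableEq E]
variable (s t : E → I)

lemma eV_mul_gE (a : E ⊕ E) :
    eV k s t (Sum.elim t s a) * gE k s t a = gE k s t a := by
  rw [eV, gE, ← map_mul]
  exact RingQuot.mkAlgHom_rel k (PathRel.tgt a)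

lemma gE_mul_eV (a : E ⊕ E) :
    gE k s t a * eV k s t (Sum.elim s t a) = gE k s t a := by
  rw [eV, gE, ← map_mul]
  exact RingQuot.mkAlgHom_rel k (PathRel.src a)


variable {W : Type} [Ring W] [Algebra k W]

section WPart
variable (ιA : RingQuot (PathRel k I E s t) →ₐ[k] W) (d σ : W →ₗ[k] W)
variable (𝒜 : ℕ → Submodule k W)

/-- commutator span in `W` -/
def Csub : Submodule k W :=
  Submodule.span k {z : W | ∃ (x : RingQuot (PathRel k I E s t)) (u : W),
    z = ιA x * u - u * ιA x}

lemma memC_comm (x : RingQuot (PathRel k I E s t)) (w : W) :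
    ιA x * w - w * ιA x ∈ Csub s t ιA :=
  Submodule.subset_span ⟨x, w, rfl⟩

lemma memC_sandwich (x y : RingQuot (PathRel k I E s t)) (w : W) :
    ιA x * w * ιA y - ιA (y * x) * w ∈ Csub s t ιA := by
  have h1 := memC_comm s t ιA x (w * ιA y)
  have h2 := memC_comm s t ιA (y * x) w
  have e : ιA x * w * ιA y - ιA (y * x) * w
      = (ιA x * (w * ιA y) - (w * ιA y) * ιA x) - (ιA (y * x) * w - w * ιA (y * x)) := by
    rw [map_mul]; noncomm_ring
  rw [e]; exact Submodule.sub_mem _ h1 h2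

section Graded
variable [GradedAlgebra 𝒜]

lemma sigma_iota (hι0 : ∀ a, ιA a ∈ 𝒜 0)
    (hσ : ∀ (n : ℕ), ∀ w ∈ 𝒜 n, σ w = ((-1 : k) ^ n) • w)
    (x : RingQuot (PathRel k I E s t)) : σ (ιA x) = ιA x := by
  rw [hσ 0 _ (hι0 x), pow_zero, one_smul]

lemma sigma_one (hσ : ∀ (n : ℕ), ∀ w ∈ 𝒜 n, σ w = ((-1 : k) ^ n) • w) :
    σ (1 : W) = 1 := by
  rw [hσ 0 1 (SetLike.one_mem_graded 𝒜), pow_zero, one_smul]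

lemma d_one (hσ : ∀ (n : ℕ), ∀ w ∈ 𝒜 n, σ w = ((-1 : k) ^ n) • w)
    (hdLeib : ∀ u v : W, d (u * v) = d u * v + σ u * d v) : d (1 : W) = 0 := by
  have h := hdLeib 1 1
  rw [mul_one, sigma_one σ 𝒜 hσ, mul_one, one_mul] at h
  have h1 : d (1 : W) - (d 1 + d 1) = 0 := by rw [← h]; abel
  have h2 : -(d (1:W)) = 0 := by rw [← h1]; abel
  simpa using h2

lemma d_iota_mul (hι0 : ∀ a, ιA a ∈ 𝒜 0)
    (hσ : ∀ (n : ℕ), ∀ w ∈ 𝒜 n, σ w = ((-1 : k) ^ n) • w)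
    (hdLeib : ∀ u v : W, d (u * v) = d u * v + σ u * d v)
    (x y : RingQuot (PathRel k I E s t)) :
    d (ιA x * ιA y) = d (ιA x) * ιA y + ιA x * d (ιA y) := by
  rw [hdLeib, sigma_iota s t ιA σ 𝒜 hι0 hσ]


lemma D_one (D : (E ⊕ E) → (RingQuot (PathRel k I E s t) →ₗ[k]
      RingQuot (PathRel k I E s t) ⊗[k] RingQuot (PathRel k I E s t)))
    (hDder : ∀ (a : E ⊕ E) (u v : RingQuot (PathRel k I E s t)),
      D a (u * v) = (u ⊗ₜ[k] (1 : RingQuot (PathRel k I E s t))) * D a v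
        + D a u * ((1 : RingQuot (PathRel k I E s t)) ⊗ₜ[k] v)) (a : E ⊕ E) :
    D a 1 = 0 := by
  have h := hDder a 1 1
  rw [mul_one, ← Algebra.TensorProduct.one_def, one_mul, mul_one] at h
  calc D a 1 = (D a 1 + D a 1) - D a 1 := by abel
    _ = D a 1 - D a 1 := by rw [← h]
    _ = 0 := by abel

lemma D_algebraMap (D : (E ⊕ E) → (RingQuot (PathRel k I E s t) →ₗ[k]
      RingQuot (PathRel k I E s t) ⊗[k] RingQuot (PathRel k I E s t)))
    (hDder : ∀ (a : E ⊕ E) (u v : RingQuot (PathRel k I E s t)),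
      D a (u * v) = (u ⊗ₜ[k] (1 : RingQuot (PathRel k I E s t))) * D a v
        + D a u * ((1 : RingQuot (PathRel k I E s t)) ⊗ₜ[k] v)) (a : E ⊕ E) (r : k) :
    D a (algebraMap k (RingQuot (PathRel k I E s t)) r) = 0 := by
  rw [Algebra.algebraMap_eq_smul_one, map_smul, D_one s t D hDder, smul_zero]

lemma keyA
    (hι0 : ∀ a, ιA a ∈ 𝒜 0)
    (hσ : ∀ (n : ℕ), ∀ w ∈ 𝒜 n, σ w = ((-1 : k) ^ n) • w)
    (hdLeib : ∀ u v : W, d (u * v) = d u * v + σ u * d v)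
    (hdR : ∀ i : I, d (ιA (eV k s t i)) = 0)
    (D : (E ⊕ E) → (RingQuot (PathRel k I E s t) →ₗ[k]
        RingQuot (PathRel k I E s t) ⊗[k] RingQuot (PathRel k I E s t)))
    (hDder : ∀ (a : E ⊕ E) (u v : RingQuot (PathRel k I E s t)),
        D a (u * v) = (u ⊗ₜ[k] (1 : RingQuot (PathRel k I E s t))) * D a v
          + D a u * ((1 : RingQuot (PathRel k I E s t)) ⊗ₜ[k] v))
    (hDval : ∀ a b : E ⊕ E,
        D a (gE k s t b) = if a = b then
            (eV k s t (Sum.elim t s a)) ⊗ₜ[k] (eV k s t (Sum.elim s t a)) else 0)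
    (hDvert : ∀ (a : E ⊕ E) (i : I), D a (eV k s t i) = 0)
    (p x y : RingQuot (PathRel k I E s t)) :
    ιA x * d (ιA p) * ιA y
      - ∑ a : E ⊕ E, ιA (KL (D a) (y * x) p) * d (ιA (gE k s t a))
      ∈ Csub s t ιA := by
  suffices H : ∀ f : FreeAlgebra k (I ⊕ (E ⊕ E)), ∀ x y : RingQuot (PathRel k I E s t),
      ιA x * d (ιA (RingQuot.mkAlgHom k (PathRel k I E s t) f)) * ιA y
        - ∑ a : E ⊕ E,
            ιA (KL (D a) (y * x) (RingQuot.mkAlgHom k (PathRel k I E s t) f))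
              * d (ιA (gE k s t a))
        ∈ Csub s t ιA by
    obtain ⟨f, rfl⟩ := RingQuot.mkAlgHom_surjective k (PathRel k I E s t) p
    exact H f x y
  intro f
  induction f using FreeAlgebra.induction with
  | grade0 r =>
      intro x y
      have hmk : RingQuot.mkAlgHom k (PathRel k I E s t) (algebraMap k _ r)
          = algebraMap k (RingQuot (PathRel k I E s t)) r := AlgHom.commutes _ r
      have hd0 : d (ιA (algebraMap k (RingQuot (PathRel k I E s t)) r)) = 0 := by
        rw [AlgHom.commutes, Algebra.algebraMap_eq_smul_one, map_smul,
          d_one d σ 𝒜 hσ hdLeib, smul_zero]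
      have hKL0 : ∀ a z, KL (D a) z (algebraMap k (RingQuot (PathRel k I E s t)) r) = 0 := by
        intro a z
        rw [KL_apply, D_algebraMap s t D hDder, zero_mul, map_zero, map_zero]
      simp only [hmk, hd0, hKL0, map_zero, zero_mul, mul_zero, Finset.sum_const_zero, sub_zero]
      exact Submodule.zero_mem _
  | grade1 c =>
      intro x y
      cases c with
      | inl i =>
          have hd0 : d (ιA (eV k s t i)) = 0 := hdR i
          have hKL0 : ∀ a z, KL (D a) z (eV k s t i) = 0 := by
            intro a z
            rw [KL_apply, hDvert, zero_mul, map_zero, map_zero]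
          show ιA x * d (ιA (eV k s t i)) * ιA y
              - ∑ a : E ⊕ E, ιA (KL (D a) (y * x) (eV k s t i)) * d (ιA (gE k s t a))
              ∈ Csub s t ιA
          simp only [hd0, hKL0, map_zero, zero_mul, mul_zero, Finset.sum_const_zero, sub_zero]
          exact Submodule.zero_mem _
      | inr b =>
          show ιA x * d (ιA (gE k s t b)) * ιA y
              - ∑ a : E ⊕ E, ιA (KL (D a) (y * x) (gE k s t b)) * d (ιA (gE k s t a))
              ∈ Csub s t ιA
          have h2 : d (ιA (gE k s t b)) = d (ιA (gE k s t b)) * ιA (eV k s t (Sum.elim s t b)) := by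
            conv_lhs => rw [← gE_mul_eV s t b]
            rw [map_mul, d_iota_mul s t ιA d σ 𝒜 hι0 hσ hdLeib, hdR, mul_zero, add_zero]
          have h1 : d (ιA (gE k s t b)) = ιA (eV k s t (Sum.elim t s b)) * d (ιA (gE k s t b)) := by
            conv_lhs => rw [← eV_mul_gE s t b]
            rw [map_mul, d_iota_mul s t ιA d σ 𝒜 hι0 hσ hdLeib, hdR, zero_mul, zero_add]
          have h3 : d (ιA (gE k s t b))
              = ιA (eV k s t (Sum.elim t s b)) * d (ιA (gE k s t b)) * ιA (eV k s t (Sum.elim s t b)) := by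
            conv_lhs => rw [h2, h1]
          have hKL : ∀ (a : E ⊕ E) (z : RingQuot (PathRel k I E s t)),
              KL (D a) z (gE k s t b)
                = if a = b then eV k s t (Sum.elim s t b) * z * eV k s t (Sum.elim t s b) else 0 := by
            intro a z
            rw [KL_apply, hDval]
            split_ifs with h
            · subst h
              rw [Algebra.TensorProduct.tmul_mul_tmul, mul_one, TensorProduct.comm_tmul,
                LinearMap.mul'_apply]
            · rw [zero_mul, map_zero, map_zero]
          have hsum : ∑ a : E ⊕ E, ιA (KL (D a) (y * x) (gE k s t b)) * d (ιA (gE k s t a))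
              = ιA (eV k s t (Sum.elim s t b) * (y * x) * eV k s t (Sum.elim t s b))
                  * d (ιA (gE k s t b)) := by
            rw [Finset.sum_eq_single b]
            · rw [hKL, if_pos rfl]
            · intro a _ hab
              rw [hKL, if_neg hab, map_zero, zero_mul]
            · intro h; exact absurd (Finset.mem_univ b) h
          rw [hsum]
          have h4 : ιA x * d (ιA (gE k s t b)) * ιA y
              = ιA (x * eV k s t (Sum.elim t s b)) * d (ιA (gE k s t b))
                  * ιA (eV k s t (Sum.elim s t b) * y) := by
            conv_lhs => rw [h3]
            rw [map_mul, map_mul]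
            noncomm_ring
          rw [h4]
          have h5 := memC_sandwich s t ιA (x * eV k s t (Sum.elim t s b))
            (eV k s t (Sum.elim s t b) * y) (d (ιA (gE k s t b)))
          rw [show (eV k s t (Sum.elim s t b) * y) * (x * eV k s t (Sum.elim t s b))
              = eV k s t (Sum.elim s t b) * (y * x) * eV k s t (Sum.elim t s b) from by
            noncomm_ring] at h5
          exact h5
  | mul a b ha hb =>
      intro x y
      rw [map_mul]
      set u := RingQuot.mkAlgHom k (PathRel k I E s t) a with hu
      set v := RingQuot.mkAlgHom k (PathRel k I E s t) b with hv
      have h1 := ha x (v * y)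
      rw [show (v * y) * x = v * (y * x) from mul_assoc v y x] at h1
      have h2 := hb (x * u) y
      rw [show y * (x * u) = (y * x) * u from (mul_assoc y x u).symm] at h2
      have h12 := Submodule.add_mem _ h1 h2
      convert h12 using 1
      rw [map_mul, d_iota_mul s t ιA d σ 𝒜 hι0 hσ hdLeib]
      simp only [KL_mul _ (hDder _) (y * x) u v, map_add, add_mul, Finset.sum_add_distrib,
        map_mul]
      noncomm_ring
  | add a b ha hb =>
      intro x y
      have h12 := Submodule.add_mem _ (ha x y) (hb x y)
      convert h12 using 1
      simp only [map_add, add_mul, mul_add, Finset.sum_add_distrib]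
      abel
end Graded
end WPart

section Bil
variable {k M V : Type} [CommRing k] [AddCommGroup M] [Module k M]
  [AddCommGroup V] [Module k V]

/-- a bilinear map as a 2-multilinear map -/
noncomputable def bil2ml (B : M →ₗ[k] M →ₗ[k] V) :
    MultilinearMap k (fun _ : Fin 2 => M) V where
  toFun a := B (a 0) (a 1)
  map_update_add' a i x y := by
    fin_cases i <;>
      simp [Function.update_apply, Fin.isValue, map_add, LinearMap.add_apply]
  map_update_smul' a i c x := by
    fin_cases i <;>
      simp [Function.update_apply, Fin.isValue, map_smul, LinearMap.smul_apply]

@[simp] lemma bil2ml_apply (B : M →ₗ[k] M →ₗ[k] V) (a : Fin 2 → M) :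
    bil2ml B a = B (a 0) (a 1) := rfl
end Bil

section KB
variable {k A : Type} [CommRing k] [Ring A] [Algebra k A]

/-- `KL` as a bilinear map `z ↦ p ↦ KL Dm z p`. -/
noncomputable def KB (Dm : A →ₗ[k] A ⊗[k] A) : A →ₗ[k] A →ₗ[k] A :=
  LinearMap.mk₂ k (fun z p => KL Dm z p)
    (fun z z' p => by
      simp only [KL_apply, TensorProduct.tmul_add, mul_add, map_add])
    (fun c z p => by
      simp only [KL_apply, TensorProduct.tmul_smul, mul_smul_comm, map_smul])
    (fun z p p' => by simp only [map_add])
    (fun c z p => by simp only [map_smul])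

@[simp] lemma KB_apply (Dm : A →ₗ[k] A ⊗[k] A) (z p : A) :
    KB Dm z p = KL Dm z p := rfl
end KB

section PartB
variable {k I E : Type} [Field k] [Fintype I] [DecidableEq I] [Fintype E] [DecidableEq E]
variable (s t : E → I)
variable {W : Type} [Ring W] [Algebra k W]
variable (ιA : RingQuot (PathRel k I E s t) →ₐ[k] W) (d σ : W →ₗ[k] W)
variable (𝒜 : ℕ → Submodule k W) [GradedAlgebra 𝒜]

lemma KL_gE (D : (E ⊕ E) → (RingQuot (PathRel k I E s t) →ₗ[k]
      RingQuot (PathRel k I E s t) ⊗[k] RingQuot (PathRel k I E s t)))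
    (hDval : ∀ a b : E ⊕ E,
      D a (gE k s t b) = if a = b then
        (eV k s t (Sum.elim t s a)) ⊗ₜ[k] (eV k s t (Sum.elim s t a)) else 0)
    (b₀ c : E ⊕ E) (z : RingQuot (PathRel k I E s t)) :
    KL (D b₀) z (gE k s t c)
      = if b₀ = c then eV k s t (Sum.elim s t b₀) * z * eV k s t (Sum.elim t s b₀) else 0 := by
  rw [KL_apply, hDval]
  split_ifs with h
  · rw [Algebra.TensorProduct.tmul_mul_tmul, mul_one, TensorProduct.comm_tmul,
      LinearMap.mul'_apply]
  · rw [zero_mul, map_zero, map_zero]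

lemma KL_vertex_move (D : (E ⊕ E) → (RingQuot (PathRel k I E s t) →ₗ[k]
      RingQuot (PathRel k I E s t) ⊗[k] RingQuot (PathRel k I E s t)))
    (hDder : ∀ (a : E ⊕ E) (u v : RingQuot (PathRel k I E s t)),
      D a (u * v) = (u ⊗ₜ[k] (1 : RingQuot (PathRel k I E s t))) * D a v
        + D a u * ((1 : RingQuot (PathRel k I E s t)) ⊗ₜ[k] v))
    (hDvert : ∀ (a : E ⊕ E) (i : I), D a (eV k s t i) = 0)
    (b₀ : E ⊕ E) (i : I) (z q : RingQuot (PathRel k I E s t)) :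
    KL (D b₀) z (eV k s t i * q) = KL (D b₀) (z * eV k s t i) q := by
  rw [KL_apply, hDder, hDvert, zero_mul, add_zero, mc_lmul, ← KL_apply]

lemma theta_sandwich (θ : RingQuot (PathRel k I E s t) →ₗ[k] RingQuot (PathRel k I E s t))
    (hθder : ∀ u v, θ (u * v) = u * θ v + θ u * v)
    (hθvert : ∀ i : I, θ (eV k s t i) = 0) (c : E ⊕ E) :
    eV k s t (Sum.elim t s c) * θ (gE k s t c) * eV k s t (Sum.elim s t c)
      = θ (gE k s t c) := by
  have hL : θ (gE k s t c) = eV k s t (Sum.elim t s c) * θ (gE k s t c) := by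
    conv_lhs => rw [← eV_mul_gE s t c]
    rw [hθder, hθvert, zero_mul, add_zero]
  have hR : θ (gE k s t c) = θ (gE k s t c) * eV k s t (Sum.elim s t c) := by
    conv_lhs => rw [← gE_mul_eV s t c]
    rw [hθder, hθvert, mul_zero, zero_add]
  conv_rhs => rw [hR, hL]

lemma partB_core
    (hι0 : ∀ a, ιA a ∈ 𝒜 0)
    (hdg : ∀ (n : ℕ), ∀ w ∈ 𝒜 n, d w ∈ 𝒜 (n + 1))
    (hσ : ∀ (n : ℕ), ∀ w ∈ 𝒜 n, σ w = ((-1 : k) ^ n) • w)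
    (hdLeib : ∀ u v : W, d (u * v) = d u * v + σ u * d v)
    (hspan : ∀ n : ℕ, 𝒜 n ≤ Submodule.span k
        {w : W | ∃ a : Fin (n + 1) → RingQuot (PathRel k I E s t),
          w = ιA (a 0) * (List.ofFn fun j : Fin n => d (ιA (a j.succ))).prod})
    (huniv : ∀ (n : ℕ) (V : Type), ∀ (_ : AddCommGroup V) (_ : Module k V),
      ∀ φ : MultilinearMap k
          (fun _ : Fin (n + 1) => RingQuot (PathRel k I E s t)) V,
        (∀ (a : Fin (n + 1) → RingQuot (PathRel k I E s t)) (j : Fin n) (i : I),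
            φ (Function.update a j.castSucc
                (a j.castSucc *
                  RingQuot.mkAlgHom k (PathRel k I E s t)
                    (FreeAlgebra.ι k (Sum.inl i))))
              = φ (Function.update a j.succ
                  (RingQuot.mkAlgHom k (PathRel k I E s t)
                      (FreeAlgebra.ι k (Sum.inl i)) * a j.succ))) →
        (∀ (a : Fin (n + 1) → RingQuot (PathRel k I E s t)) (j : Fin n),
            a j.succ ∈ Submodule.span k
              (Set.range fun i : I =>
                RingQuot.mkAlgHom k (PathRel k I E s t)
                  (FreeAlgebra.ι k (Sum.inl i))) → φ a = 0) →
        ∃! Φ : W →ₗ[k] V,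
          (∀ a : Fin (n + 1) → RingQuot (PathRel k I E s t),
            Φ (ιA (a 0) * (List.ofFn fun j : Fin n => d (ιA (a j.succ))).prod) = φ a) ∧
          (∀ m : ℕ, m ≠ n → ∀ w ∈ 𝒜 m, Φ w = 0))
    (D : (E ⊕ E) → (RingQuot (PathRel k I E s t) →ₗ[k]
        RingQuot (PathRel k I E s t) ⊗[k] RingQuot (PathRel k I E s t)))
    (hDder : ∀ (a : E ⊕ E) (u v : RingQuot (PathRel k I E s t)),
        D a (u * v) = (u ⊗ₜ[k] (1 : RingQuot (PathRel k I E s t))) * D a v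
          + D a u * ((1 : RingQuot (PathRel k I E s t)) ⊗ₜ[k] v))
    (hDval : ∀ a b : E ⊕ E,
        D a (gE k s t b) = if a = b then
          (eV k s t (Sum.elim t s a)) ⊗ₜ[k] (eV k s t (Sum.elim s t a)) else 0)
    (hDvert : ∀ (a : E ⊕ E) (i : I), D a (eV k s t i) = 0)
    (p : RingQuot (PathRel k I E s t))
    (θ : RingQuot (PathRel k I E s t) →ₗ[k] RingQuot (PathRel k I E s t))
    (hθder : ∀ u v, θ (u * v) = u * θ v + θ u * v)
    (hθvert : ∀ i : I, θ (eV k s t i) = 0)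
    (iθ : W →ₗ[k] W)
    (hiθd : ∀ z, iθ (d (ιA z)) = ιA (θ z))
    (hiθL : ∀ u v : W, iθ (u * v) = iθ u * v + σ u * iθ v)
    (hω : iθ (∑ a : E,
        d (ιA (gE k s t (Sum.inl a))) * d (ιA (gE k s t (Sum.inr a))))
        - d (ιA p) ∈ Csub s t ιA)
    (b₀ : E ⊕ E) :
    (∑ a : E, ((if b₀ = Sum.inr a then θ (gE k s t (Sum.inl a)) else 0)
        - (if b₀ = Sum.inl a then θ (gE k s t (Sum.inr a)) else 0)))
      = cycDer (D b₀) p := by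
  -- conditions for the universal property
  have cond1 : ∀ (a : Fin 2 → RingQuot (PathRel k I E s t)) (j : Fin 1) (i : I),
      (bil2ml (KB (D b₀))) (Function.update a j.castSucc
          (a j.castSucc * RingQuot.mkAlgHom k (PathRel k I E s t)
            (FreeAlgebra.ι k (Sum.inl i))))
        = (bil2ml (KB (D b₀))) (Function.update a j.succ
            (RingQuot.mkAlgHom k (PathRel k I E s t)
              (FreeAlgebra.ι k (Sum.inl i)) * a j.succ)) := by
    intro a j i
    have hj : j = 0 := Subsingleton.elim j 0
    subst hj
    show (bil2ml (KB (D b₀))) (Function.update a 0 (a 0 * eV k s t i))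
        = (bil2ml (KB (D b₀))) (Function.update a 1 (eV k s t i * a 1))
    simp only [bil2ml_apply, KB_apply, Function.update_self,
      Function.update_of_ne (show (1 : Fin 2) ≠ 0 by decide),
      Function.update_of_ne (show (0 : Fin 2) ≠ 1 by decide)]
    exact (KL_vertex_move s t D hDder hDvert b₀ i (a 0) (a 1)).symm
  have cond2 : ∀ (a : Fin 2 → RingQuot (PathRel k I E s t)) (j : Fin 1),
      a j.succ ∈ Submodule.span k
        (Set.range fun i : I =>
          RingQuot.mkAlgHom k (PathRel k I E s t) (FreeAlgebra.ι k (Sum.inl i))) →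
      (bil2ml (KB (D b₀))) a = 0 := by
    intro a j hmem
    have hj : j = 0 := Subsingleton.elim j 0
    subst hj
    have hker : Submodule.span k
        (Set.range fun i : I =>
          RingQuot.mkAlgHom k (PathRel k I E s t) (FreeAlgebra.ι k (Sum.inl i)))
        ≤ LinearMap.ker (KB (D b₀) (a 0)) := by
      rw [Submodule.span_le]
      rintro - ⟨i, rfl⟩
      simp only [SetLike.mem_coe, LinearMap.mem_ker]
      show KB (D b₀) (a 0) (eV k s t i) = 0
      rw [KB_apply, KL_apply, hDvert, zero_mul, map_zero, map_zero]
    have := hker hmem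
    simpa only [LinearMap.mem_ker, bil2ml_apply, Fin.succ_zero_eq_one] using this
  obtain ⟨Φ, ⟨hΦ1, hΦ2⟩, -⟩ := huniv 1 (RingQuot (PathRel k I E s t))
    inferInstance inferInstance (bil2ml (KB (D b₀))) cond1 cond2
  have hΦ1' : ∀ x z : RingQuot (PathRel k I E s t),
      Φ (ιA x * d (ιA z)) = KL (D b₀) x z := by
    intro x z
    have h := hΦ1 ![x, z]
    simpa using h
  have hΦd : ∀ q : RingQuot (PathRel k I E s t), Φ (d (ιA q)) = KL (D b₀) 1 q := by
    intro q
    have h := hΦ1' 1 q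
    rwa [map_one, one_mul] at h
  have hkey : ∀ (z : RingQuot (PathRel k I E s t)) (w : W),
      Φ (ιA z * w - w * ιA z) = 0 := by
    intro z w
    induction w using DirectSum.Decomposition.inductionOn 𝒜 with
    | zero => simp
    | add w w' hw hw' =>
        have e : ιA z * (w + w') - (w + w') * ιA z
            = (ιA z * w - w * ιA z) + (ιA z * w' - w' * ιA z) := by noncomm_ring
        rw [e, map_add, hw, hw', add_zero]
    | homogeneous m =>
        rename_i i
        obtain ⟨w, hw⟩ := m
        show Φ (ιA z * w - w * ιA z) = 0
        by_cases hi : i = 1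
        · subst hi
          have hwsp := hspan 1 hw
          have hker : Submodule.span k
              {w : W | ∃ a : Fin 2 → RingQuot (PathRel k I E s t),
                w = ιA (a 0) * (List.ofFn fun j : Fin 1 => d (ιA (a j.succ))).prod}
              ≤ LinearMap.ker (Φ ∘ₗ (LinearMap.mulLeft k (ιA z)
                  - LinearMap.mulRight k (ιA z))) := by
            rw [Submodule.span_le]
            rintro - ⟨a, rfl⟩
            simp only [SetLike.mem_coe, LinearMap.mem_ker, LinearMap.comp_apply,
              LinearMap.sub_apply, LinearMap.mulLeft_apply, LinearMap.mulRight_apply,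
              map_sub]
            rw [show (List.ofFn fun j : Fin 1 => d (ιA (a j.succ))).prod
                = d (ιA (a 1)) from by simp]
            have e1 : ιA z * (ιA (a 0) * d (ιA (a 1)))
                = ιA (z * a 0) * d (ιA (a 1)) := by rw [map_mul, mul_assoc]
            have hL : d (ιA (a 1)) * ιA z
                = d (ιA (a 1 * z)) - ιA (a 1) * d (ιA z) := by
              rw [eq_sub_iff_add_eq, map_mul, d_iota_mul s t ιA d σ 𝒜 hι0 hσ hdLeib]
            have e2 : (ιA (a 0) * d (ιA (a 1))) * ιA z
                = ιA (a 0) * d (ιA (a 1 * z)) - ιA (a 0 * a 1) * d (ιA z) := by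
              rw [mul_assoc, hL, mul_sub, ← mul_assoc, ← map_mul]
            rw [e1, e2, map_sub, hΦ1', hΦ1', hΦ1',
              KL_mul (D b₀) (hDder b₀) (a 0) (a 1) z]
            abel
          have h := hker hwsp
          simp only [LinearMap.mem_ker, LinearMap.comp_apply, LinearMap.sub_apply,
            LinearMap.mulLeft_apply, LinearMap.mulRight_apply] at h
          rw [map_sub]
          rw [map_sub] at h
          exact h
        · have h1 : ιA z * w ∈ 𝒜 i := by
            have := SetLike.mul_mem_graded (hι0 z) hw
            simpa using this
          have h2 : w * ιA z ∈ 𝒜 i := by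
            have := SetLike.mul_mem_graded hw (hι0 z)
            simpa using this
          rw [map_sub, hΦ2 i hi _ h1, hΦ2 i hi _ h2, sub_zero]
  have hΦC : ∀ w ∈ Csub s t ιA, Φ w = 0 := by
    intro w hwC
    have hle : Csub s t ιA ≤ LinearMap.ker Φ := by
      rw [Csub, Submodule.span_le]
      rintro - ⟨x', u', rfl⟩
      simp only [SetLike.mem_coe, LinearMap.mem_ker]
      exact hkey x' u'
    exact hle hwC
  have hσd : ∀ q : RingQuot (PathRel k I E s t), σ (d (ιA q)) = - d (ιA q) := by
    intro q
    rw [hσ 1 _ (hdg 0 _ (hι0 q)), pow_one, neg_smul, one_smul]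
  have hterm : ∀ a : E,
      Φ (iθ (d (ιA (gE k s t (Sum.inl a))) * d (ιA (gE k s t (Sum.inr a)))))
        = (if b₀ = Sum.inr a then θ (gE k s t (Sum.inl a)) else 0)
          - (if b₀ = Sum.inl a then θ (gE k s t (Sum.inr a)) else 0) := by
    intro a
    have hexp : iθ (d (ιA (gE k s t (Sum.inl a))) * d (ιA (gE k s t (Sum.inr a))))
        = ιA (θ (gE k s t (Sum.inl a))) * d (ιA (gE k s t (Sum.inr a)))
          - d (ιA (gE k s t (Sum.inl a))) * ιA (θ (gE k s t (Sum.inr a))) := by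
      rw [hiθL, hiθd, hiθd, hσd, neg_mul, ← sub_eq_add_neg]
    have hA : Φ (ιA (θ (gE k s t (Sum.inl a))) * d (ιA (gE k s t (Sum.inr a))))
        = if b₀ = Sum.inr a then θ (gE k s t (Sum.inl a)) else 0 := by
      rw [hΦ1', KL_gE s t D hDval]
      split_ifs with h
      · subst h
        exact theta_sandwich s t θ hθder hθvert (Sum.inl a)
      · rfl
    have hB : Φ (d (ιA (gE k s t (Sum.inl a))) * ιA (θ (gE k s t (Sum.inr a))))
        = if b₀ = Sum.inl a then θ (gE k s t (Sum.inr a)) else 0 := by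
      have hL : d (ιA (gE k s t (Sum.inl a))) * ιA (θ (gE k s t (Sum.inr a)))
          = d (ιA (gE k s t (Sum.inl a) * θ (gE k s t (Sum.inr a))))
            - ιA (gE k s t (Sum.inl a)) * d (ιA (θ (gE k s t (Sum.inr a)))) := by
        rw [eq_sub_iff_add_eq, map_mul, d_iota_mul s t ιA d σ 𝒜 hι0 hσ hdLeib]
      rw [hL, map_sub, hΦd, hΦ1',
        KL_mul (D b₀) (hDder b₀) 1 (gE k s t (Sum.inl a)) (θ (gE k s t (Sum.inr a))),
        one_mul, mul_one, add_sub_cancel_left, KL_gE s t D hDval]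
      split_ifs with h
      · subst h
        exact theta_sandwich s t θ hθder hθvert (Sum.inr a)
      · rfl
    rw [hexp, map_sub, hA, hB]
  have h0 : Φ (iθ (∑ a : E,
      d (ιA (gE k s t (Sum.inl a))) * d (ιA (gE k s t (Sum.inr a))))
      - d (ιA p)) = 0 := hΦC _ hω
  rw [map_sub, sub_eq_zero] at h0
  have hΦω : Φ (iθ (∑ a : E,
      d (ιA (gE k s t (Sum.inl a))) * d (ιA (gE k s t (Sum.inr a)))))
      = ∑ a : E, ((if b₀ = Sum.inr a then θ (gE k s t (Sum.inl a)) else 0)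
          - (if b₀ = Sum.inl a then θ (gE k s t (Sum.inr a)) else 0)) := by
    rw [map_sum, map_sum]
    exact Finset.sum_congr rfl fun a _ => hterm a
  rw [← hΦω, h0, hΦd, KL_one]
end PartB

section PartC
variable {k I E : Type} [Field k] [Fintype I] [DecidableEq I] [Fintype E] [DecidableEq E]
variable (s t : E → I)

lemma InsL_gE (D : (E ⊕ E) → (RingQuot (PathRel k I E s t) →ₗ[k]
      RingQuot (PathRel k I E s t) ⊗[k] RingQuot (PathRel k I E s t)))
    (hDval : ∀ a b : E ⊕ E,
      D a (gE k s t b) = if a = b then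
        (eV k s t (Sum.elim t s a)) ⊗ₜ[k] (eV k s t (Sum.elim s t a)) else 0)
    (c b : E ⊕ E) (h : RingQuot (PathRel k I E s t)) :
    InsL (D c) h (gE k s t b)
      = if c = b then eV k s t (Sum.elim t s c) * (h * eV k s t (Sum.elim s t c)) else 0 := by
  rw [InsL_apply, hDval]
  split_ifs with hc
  · rw [TensorProduct.map_tmul, LinearMap.id_apply, LinearMap.mulLeft_apply,
      LinearMap.mul'_apply]
  · rw [map_zero, map_zero]

lemma InsL_mul (D : (E ⊕ E) → (RingQuot (PathRel k I E s t) →ₗ[k]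
      RingQuot (PathRel k I E s t) ⊗[k] RingQuot (PathRel k I E s t)))
    (hDder : ∀ (a : E ⊕ E) (u v : RingQuot (PathRel k I E s t)),
      D a (u * v) = (u ⊗ₜ[k] (1 : RingQuot (PathRel k I E s t))) * D a v
        + D a u * ((1 : RingQuot (PathRel k I E s t)) ⊗ₜ[k] v))
    (c : E ⊕ E) (h u v : RingQuot (PathRel k I E s t)) :
    InsL (D c) h (u * v) = u * InsL (D c) h v + InsL (D c) h u * v := by
  rw [InsL_apply, hDder, map_add, map_add, ins_lmul, ins_rmul, InsL_apply, InsL_apply]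

lemma theta_expand (D : (E ⊕ E) → (RingQuot (PathRel k I E s t) →ₗ[k]
      RingQuot (PathRel k I E s t) ⊗[k] RingQuot (PathRel k I E s t)))
    (hDder : ∀ (a : E ⊕ E) (u v : RingQuot (PathRel k I E s t)),
      D a (u * v) = (u ⊗ₜ[k] (1 : RingQuot (PathRel k I E s t))) * D a v
        + D a u * ((1 : RingQuot (PathRel k I E s t)) ⊗ₜ[k] v))
    (hDval : ∀ a b : E ⊕ E,
      D a (gE k s t b) = if a = b then
        (eV k s t (Sum.elim t s a)) ⊗ₜ[k] (eV k s t (Sum.elim s t a)) else 0)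
    (hDvert : ∀ (a : E ⊕ E) (i : I), D a (eV k s t i) = 0)
    (θ : RingQuot (PathRel k I E s t) →ₗ[k] RingQuot (PathRel k I E s t))
    (hθder : ∀ u v, θ (u * v) = u * θ v + θ u * v)
    (hθvert : ∀ i : I, θ (eV k s t i) = 0)
    (q : RingQuot (PathRel k I E s t)) :
    θ q = ∑ c : E ⊕ E, InsL (D c) (θ (gE k s t c)) q := by
  suffices H : ∀ f : FreeAlgebra k (I ⊕ (E ⊕ E)),
      θ (RingQuot.mkAlgHom k (PathRel k I E s t) f)
        = ∑ c : E ⊕ E, InsL (D c) (θ (gE k s t c))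
            (RingQuot.mkAlgHom k (PathRel k I E s t) f) by
    obtain ⟨f, rfl⟩ := RingQuot.mkAlgHom_surjective k (PathRel k I E s t) q
    exact H f
  intro f
  induction f using FreeAlgebra.induction with
  | grade0 r =>
      have hθ1 : θ (1 : RingQuot (PathRel k I E s t)) = 0 := by
        have h := hθder 1 1
        simp only [mul_one, one_mul] at h
        exact right_eq_add.mp h
      have hz : ∀ c : E ⊕ E, InsL (D c) (θ (gE k s t c))
          (r • (1 : RingQuot (PathRel k I E s t))) = 0 := by
        intro c
        rw [InsL_apply, map_smul, D_one s t D hDder, smul_zero, map_zero, map_zero]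
      rw [AlgHom.commutes, Algebra.algebraMap_eq_smul_one, map_smul, hθ1, smul_zero,
        Finset.sum_congr rfl fun c _ => hz c, Finset.sum_const_zero]
  | grade1 c' =>
      cases c' with
      | inl i =>
          show θ (eV k s t i) = ∑ c : E ⊕ E, InsL (D c) (θ (gE k s t c)) (eV k s t i)
          have hz : ∀ c : E ⊕ E, InsL (D c) (θ (gE k s t c)) (eV k s t i) = 0 := by
            intro c
            rw [InsL_apply, hDvert, map_zero, map_zero]
          rw [hθvert, Finset.sum_congr rfl fun c _ => hz c, Finset.sum_const_zero]
      | inr b =>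
          show θ (gE k s t b) = ∑ c : E ⊕ E, InsL (D c) (θ (gE k s t c)) (gE k s t b)
          rw [Finset.sum_eq_single b]
          · rw [InsL_gE s t D hDval, if_pos rfl, ← mul_assoc]
            exact (theta_sandwich s t θ hθder hθvert b).symm
          · intro c _ hcb
            rw [InsL_gE s t D hDval, if_neg hcb]
          · intro h; exact absurd (Finset.mem_univ b) h
  | mul a b ha hb =>
      rw [map_mul, hθder, ha, hb]
      rw [Finset.sum_congr rfl fun c _ =>
        InsL_mul s t D hDder c (θ (gE k s t c)) _ _]
      rw [Finset.sum_add_distrib, Finset.mul_sum, Finset.sum_mul]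
  | add a b ha hb =>
      rw [map_add, map_add, ha, hb, ← Finset.sum_add_distrib]
      exact Finset.sum_congr rfl fun c _ => (map_add _ _ _).symm
end PartC


/-- **Necklace bracket formulas.**  Let `P = kQ̄` be the path algebra of
the double of a quiver, `ω = Σ_{a∈Q} da da*` the canonical bi-symplectic form, `∂_a`
the cyclic derivatives, `θ_p` the Hamiltonian derivation of `p` determined by
`i_{θ_p} ω = dp` in `DR¹`.  Then: (a) `dp = Σ_{a∈Q̄} (∂_a p) da` in `DR¹_R P`;
(b) `θ_p(a) = ε(a) ∂_{a*} p` for all edges `a ∈ Q̄`; (c) the necklace Lie bracket is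
`{p, q} = θ_p(q) = Σ_{a∈Q̄} ε(a*) (∂_a p)(∂_{a*} q)` modulo `[P, P]`. -/
theorem stmt18 (k I E W : Type) [Field k] [CharZero k]
    [Fintype I] [DecidableEq I] [Fintype E] [DecidableEq E] (s t : E → I)
    -- the noncommutative forms of P = kQ̄ relative to R = kI
    [Ring W] [Algebra k W]
    (𝒜 : ℕ → Submodule k W) [GradedAlgebra 𝒜]
    (ιA : RingQuot (PathRel k I E s t) →ₐ[k] W) (d σ : W →ₗ[k] W)
    (hι0 : ∀ a, ιA a ∈ 𝒜 0)
    (hdg : ∀ (n : ℕ), ∀ w ∈ 𝒜 n, d w ∈ 𝒜 (n + 1))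
    (hσ : ∀ (n : ℕ), ∀ w ∈ 𝒜 n, σ w = ((-1 : k) ^ n) • w)
    (hdd : ∀ w : W, d (d w) = 0)
    (hdLeib : ∀ u v : W, d (u * v) = d u * v + σ u * d v)
    (hdR : ∀ i : I,
      d (ιA (RingQuot.mkAlgHom k (PathRel k I E s t)
              (FreeAlgebra.ι k (Sum.inl i)))) = 0)
    (hspan : ∀ n : ℕ, 𝒜 n ≤ Submodule.span k
        {w : W | ∃ a : Fin (n + 1) → RingQuot (PathRel k I E s t),
          w = ιA (a 0) * (List.ofFn fun j : Fin n => d (ιA (a j.succ))).prod})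
    (huniv : ∀ (n : ℕ) (V : Type), ∀ (_ : AddCommGroup V) (_ : Module k V),
      ∀ φ : MultilinearMap k
          (fun _ : Fin (n + 1) => RingQuot (PathRel k I E s t)) V,
        (∀ (a : Fin (n + 1) → RingQuot (PathRel k I E s t)) (j : Fin n) (i : I),
            φ (Function.update a j.castSucc
                (a j.castSucc *
                  RingQuot.mkAlgHom k (PathRel k I E s t)
                    (FreeAlgebra.ι k (Sum.inl i))))
              = φ (Function.update a j.succ
                  (RingQuot.mkAlgHom k (PathRel k I E s t)
                      (FreeAlgebra.ι k (Sum.inl i)) * a j.succ))) →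
        (∀ (a : Fin (n + 1) → RingQuot (PathRel k I E s t)) (j : Fin n),
            a j.succ ∈ Submodule.span k
              (Set.range fun i : I =>
                RingQuot.mkAlgHom k (PathRel k I E s t)
                  (FreeAlgebra.ι k (Sum.inl i))) → φ a = 0) →
        ∃! Φ : W →ₗ[k] V,
          (∀ a : Fin (n + 1) → RingQuot (PathRel k I E s t),
            Φ (ιA (a 0) * (List.ofFn fun j : Fin n => d (ιA (a j.succ))).prod) = φ a) ∧
          (∀ m : ℕ, m ≠ n → ∀ w ∈ 𝒜 m, Φ w = 0))
    -- the partial double derivations ∂/∂a on P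
    (D : E ⊕ E → (RingQuot (PathRel k I E s t) →ₗ[k]
        RingQuot (PathRel k I E s t) ⊗[k] RingQuot (PathRel k I E s t)))
    (hDder : ∀ (a : E ⊕ E) (u v : RingQuot (PathRel k I E s t)),
        D a (u * v) = (u ⊗ₜ[k] (1 : RingQuot (PathRel k I E s t))) * D a v
          + D a u * ((1 : RingQuot (PathRel k I E s t)) ⊗ₜ[k] v))
    (hDval : ∀ a b : E ⊕ E,
        D a (RingQuot.mkAlgHom k (PathRel k I E s t) (FreeAlgebra.ι k (Sum.inr b)))
          = if a = b then
              (RingQuot.mkAlgHom k (PathRel k I E s t)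
                  (FreeAlgebra.ι k (Sum.inl (Sum.elim t s a))))
                ⊗ₜ[k]
              (RingQuot.mkAlgHom k (PathRel k I E s t)
                  (FreeAlgebra.ι k (Sum.inl (Sum.elim s t a))))
            else 0)
    (hDvert : ∀ (a : E ⊕ E) (i : I),
        D a (RingQuot.mkAlgHom k (PathRel k I E s t)
              (FreeAlgebra.ι k (Sum.inl i))) = 0) :
    -- (a)  dp = Σ_{a ∈ Q̄} (∂_a p) da  in DR¹
    (∀ p : RingQuot (PathRel k I E s t),
      d (ιA p) - ∑ a : E ⊕ E,
          ιA (cycDer (D a) p) *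
            d (ιA (RingQuot.mkAlgHom k (PathRel k I E s t)
                (FreeAlgebra.ι k (Sum.inr a))))
        ∈ Submodule.span k
            {z : W | ∃ (x : RingQuot (PathRel k I E s t)) (u : W),
              z = ιA x * u - u * ιA x})
    -- (b), (c): if θ is a derivation with i_θ ω = dp in DR¹, then
    --           θ(a) = ε(a) ∂_{a*} p and {p, q} = θ(q) = Σ ε(a*)(∂_a p)(∂_{a*} q)
    ∧ (∀ (p : RingQuot (PathRel k I E s t))
        (θ : RingQuot (PathRel k I E s t) →ₗ[k] RingQuot (PathRel k I E s t)),
        (∀ u v, θ (u * v) = u * θ v + θ u * v) →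
        (∀ i : I, θ (RingQuot.mkAlgHom k (PathRel k I E s t)
            (FreeAlgebra.ι k (Sum.inl i))) = 0) →
        ∀ iθ : W →ₗ[k] W,
          (∀ z, iθ (ιA z) = 0) →
          (∀ z, iθ (d (ιA z)) = ιA (θ z)) →
          (∀ u v : W, iθ (u * v) = iθ u * v + σ u * iθ v) →
          iθ (∑ a : E,
              d (ιA (RingQuot.mkAlgHom k (PathRel k I E s t)
                  (FreeAlgebra.ι k (Sum.inr (Sum.inl a)))))
                * d (ιA (RingQuot.mkAlgHom k (PathRel k I E s t)
                  (FreeAlgebra.ι k (Sum.inr (Sum.inr a))))))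
            - d (ιA p)
            ∈ Submodule.span k
                {z : W | ∃ (x : RingQuot (PathRel k I E s t)) (u : W),
                  z = ιA x * u - u * ιA x} →
          (∀ a : E ⊕ E,
            θ (RingQuot.mkAlgHom k (PathRel k I E s t)
                (FreeAlgebra.ι k (Sum.inr a)))
              = signE k a • cycDer (D (starE a)) p) ∧
          (∀ q : RingQuot (PathRel k I E s t),
            θ q - ∑ a : E ⊕ E,
                signE k (starE a) • (cycDer (D a) p * cycDer (D (starE a)) q)
              ∈ Submodule.span k
                  {z : RingQuot (PathRel k I E s t) |
                    ∃ u v : RingQuot (PathRel k I E s t), z = u * v - v * u})) := by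
  constructor
  · intro p
    have h := keyA s t ιA d σ 𝒜 hι0 hσ hdLeib hdR D hDder hDval hDvert p 1 1
    simp only [map_one, one_mul, mul_one, KL_one] at h
    exact h
  · intro p θ hθder hθvert iθ hiθ0 hiθd hiθL hω
    have hb : ∀ b : E ⊕ E, θ (gE k s t b) = signE k b • cycDer (D (starE b)) p := by
      intro b
      cases b with
      | inl a₀ =>
          have h := partB_core s t ιA d σ 𝒜 hι0 hdg hσ hdLeib hspan huniv D hDder
            hDval hDvert p θ hθder hθvert iθ hiθd hiθL hω (Sum.inr a₀)
          simp only [reduceCtorEq, if_false, sub_zero, Sum.inr.injEq,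
            Finset.sum_ite_eq, Finset.mem_univ, if_true] at h
          show θ (gE k s t (Sum.inl a₀)) = (1 : k) • cycDer (D (Sum.inr a₀)) p
          rw [one_smul]
          exact h
      | inr a₀ =>
          have h := partB_core s t ιA d σ 𝒜 hι0 hdg hσ hdLeib hspan huniv D hDder
            hDval hDvert p θ hθder hθvert iθ hiθd hiθL hω (Sum.inl a₀)
          simp only [reduceCtorEq, if_false, zero_sub, Sum.inl.injEq,
            Finset.sum_neg_distrib, Finset.sum_ite_eq, Finset.mem_univ, if_true] at h
          show θ (gE k s t (Sum.inr a₀)) = ((-1 : k)) • cycDer (D (Sum.inl a₀)) p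
          rw [show ((-1 : k)) • cycDer (D (Sum.inl a₀)) p
              = -cycDer (D (Sum.inl a₀)) p from by module, ← h, neg_neg]
    constructor
    · intro a; exact hb a
    · intro q
      have hexp := theta_expand s t D hDder hDval hDvert θ hθder hθvert q
      have hterm : ∀ c : E ⊕ E,
          InsL (D c) (θ (gE k s t c)) q
            - signE k c • (cycDer (D (starE c)) p * cycDer (D c) q)
          ∈ Submodule.span k
              {z : RingQuot (PathRel k I E s t) |
                ∃ u v : RingQuot (PathRel k I E s t), z = u * v - v * u} := by
        intro c
        rw [hb c]
        have hsm : InsL (D c) (signE k c • cycDer (D (starE c)) p) q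
            = signE k c • InsL (D c) (cycDer (D (starE c)) p) q := by
          rw [InsL_apply, InsL_apply, ins_smul]
        rw [hsm]
        have hmem := Submodule.smul_mem (Submodule.span k
          {z : RingQuot (PathRel k I E s t) |
            ∃ u v : RingQuot (PathRel k I E s t), z = u * v - v * u})
          (signE k c) (ins_sub_comm_mem (cycDer (D (starE c)) p) (D c q))
        rw [smul_sub] at hmem
        exact hmem
      have hre : (∑ a : E ⊕ E,
            signE k (starE a) • (cycDer (D a) p * cycDer (D (starE a)) q))
          = ∑ a : E ⊕ E, signE k a • (cycDer (D (starE a)) p * cycDer (D a) q) := by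
        apply Fintype.sum_equiv (Equiv.sumComm E E)
        intro a
        cases a <;> rfl
      show θ q - ∑ a : E ⊕ E,
          signE k (starE a) • (cycDer (D a) p * cycDer (D (starE a)) q)
        ∈ Submodule.span k
            {z : RingQuot (PathRel k I E s t) |
              ∃ u v : RingQuot (PathRel k I E s t), z = u * v - v * u}
      rw [hre, hexp, ← Finset.sum_sub_distrib]
      exact Submodule.sum_mem _ fun c _ => hterm c
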